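/- arXiv:0810.4216 — 2 statements merged into one kernel-verified Lean document; each statement's English description precedes it below -/
import Mathlib

section
/- There exists a constant C > 0, depending only on κ_1,…,κ_d, such that for every f ∈ L^1(μ_κ) and every λ > 0, μ_κ({x ∈ ℝ^d : M_κ^R f(x) > λ}) ≤ (C/λ) ‖f‖_{κ,1}. -/
noncomputable section
open MeasureTheory Set Real
open scoped ENNReal NNReal

/-- one-dimensional measure `dμ_κ(x) = |x|^{2κ} dx` -/
def muK1 (κ : ℝ) : Measure ℝ :=
  volume.withDensity fun x => ENNReal.ofReal (|x| ^ (2 * κ))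

/-- the measure `μ_κ` on `ℝ^d` with density `∏_j |x_j|^{2κ_j}` -/
def muK (d : ℕ) (κ : Fin d → ℝ) : Measure (Fin d → ℝ) :=
  volume.withDensity fun x => ENNReal.ofReal (∏ j, |x j| ^ (2 * κ j))

/-- the constant `M_κ = Γ(κ+1/2)/(Γ(κ)Γ(1/2))` -/
def Mconst (κ : ℝ) : ℝ := Real.Gamma (κ + 1/2) / (Real.Gamma κ * Real.Gamma (1/2))

/-- `σ_{x,y,z}` -/
def sigma3 (x y z : ℝ) : ℝ := if x ≠ 0 ∧ y ≠ 0 then (x^2 + y^2 - z^2) / (2*x*y) else 0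

/-- area of the (possibly degenerate) triangle with side lengths `x,y,z` (Heron) -/
def triArea (x y z : ℝ) : ℝ :=
  Real.sqrt (((x+y+z)/2) * ((x+y+z)/2 - x) * ((x+y+z)/2 - y) * ((x+y+z)/2 - z))

/-- the kernel `K_κ(x,y,z)` -/
def Kker (κ x y z : ℝ) : ℝ :=
  if |x - y| ≤ z ∧ z ≤ x + y then
    (2:ℝ) ^ (2*κ - 2) * Mconst κ * triArea x y z ^ (2*κ - 2) * (x*y*z) ^ (1 - 2*κ)
  else 0

/-- density of the measure `ν^{κ,+}_{x,y}` with respect to Lebesgue measure -/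
def nuDens (κ x y z : ℝ) : ℝ≥0∞ :=
  ENNReal.ofReal ((1/2) * Kker κ |x| |y| |z| * (1 - sigma3 x y z) * |z| ^ (2*κ))

/-- the measure `ν^{κ,+}_{x,y}` -/
def nuPlus (κ x y : ℝ) : Measure ℝ := volume.withDensity (nuDens κ x y)

/-- the product measure `υ^κ_{x,y} = ν^{κ_1,+}_{x_1,y_1} ⊗ ⋯ ⊗ ν^{κ_d,+}_{x_d,y_d}` -/
def upsilon (d : ℕ) (κ x y : Fin d → ℝ) : Measure (Fin d → ℝ) :=
  volume.withDensity fun z => ∏ j, nuDens (κ j) (x j) (y j) (z j)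

/-- the set `ℝ^d_reg` of regular points -/
def regSet (d : ℕ) : Set (Fin d → ℝ) := {x | ∀ j, x j ≠ 0}

/-- the Euclidean ball of radius `r` centered at the origin -/
def eBall (d : ℕ) (r : ℝ) : Set (Fin d → ℝ) := {x | ∑ j, (x j)^2 < r^2}

/-- the open cube `Q_r` -/
def cubeQ (d : ℕ) (r : ℝ) : Set (Fin d → ℝ) := {x | ∀ j, |x j| < r}

/-- the constant `c_κ` with `c_κ⁻¹ = ∫ e^{-‖x‖²/2} dμ_κ` -/
def cKappa (d : ℕ) (κ : Fin d → ℝ) : ℝ :=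
  (∫ x, Real.exp (-(∑ j, (x j)^2) / 2) ∂(muK d κ))⁻¹

open Classical in
/-- the `ℤ_2^d` Dunkl maximal operator (explicit form), vanishing off `ℝ^d_reg` -/
def Mdunkl (d : ℕ) (κ : Fin d → ℝ) (f : (Fin d → ℝ) → ℝ) (x : Fin d → ℝ) : ℝ≥0∞ :=
  if x ∈ regSet d then
    ⨆ (r : ℝ) (_ : 0 < r), ENNReal.ofReal
      ((cKappa d κ / (muK d κ (eBall d r)).toReal) *
        |∫ y in regSet d, f y * (upsilon d κ x (-y) (eBall d r)).toReal ∂(muK d κ)|)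
  else 0

/-- the cube Dunkl maximal operator `M_κ^Q` (explicit form) -/
def MdunklQ (d : ℕ) (κ : Fin d → ℝ) (f : (Fin d → ℝ) → ℝ) (x : Fin d → ℝ) : ℝ≥0∞ :=
  ⨆ (r : ℝ) (_ : 0 < r), ENNReal.ofReal
    ((cKappa d κ / (muK d κ (cubeQ d r)).toReal) *
      |∫ y in regSet d, f y * (upsilon d κ x (-y) (cubeQ d r)).toReal ∂(muK d κ)|)

/-- the interval `I(x,r) = [max{0,|x|-r}, |x|+r)` -/
def Iset (x r : ℝ) : Set ℝ := Set.Ico (max 0 (|x| - r)) (|x| + r)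

/-- the rectangle `R(z,r) = I(z_1,r) × ⋯ × I(z_d,r)` -/
def Rset (d : ℕ) (z : Fin d → ℝ) (r : ℝ) : Set (Fin d → ℝ) :=
  Set.univ.pi fun j => Iset (z j) r

/-- the weighted maximal operator `M_κ^R` -/
def MR (d : ℕ) (κ : Fin d → ℝ) (f : (Fin d → ℝ) → ℝ) (x : Fin d → ℝ) : ℝ≥0∞ :=
  ⨆ (r : ℝ) (_ : 0 < r),
    (muK d κ (Rset d x r))⁻¹ *
      ∫⁻ y in {y | (fun j => |y j|) ∈ Rset d x r}, ENNReal.ofReal |f y| ∂(muK d κ)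

/-- Rösler's explicit formula for the one-dimensional Dunkl translation `τ_x^κ f(y)` -/
def tauK (κ x : ℝ) (f : ℝ → ℝ) (y : ℝ) : ℝ :=
  (1/2) * (∫ t in Set.Ioo (-1:ℝ) 1,
      f (Real.sqrt (x^2 + y^2 + 2*x*y*t)) *
        (1 + (x + y) / Real.sqrt (x^2 + y^2 + 2*x*y*t)) *
        (Mconst κ * (1 + t) * (1 - t^2) ^ (κ - 1)))
  + (1/2) * (∫ t in Set.Ioo (-1:ℝ) 1,
      f (-Real.sqrt (x^2 + y^2 + 2*x*y*t)) *
        (1 - (x + y) / Real.sqrt (x^2 + y^2 + 2*x*y*t)) *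
        (Mconst κ * (1 + t) * (1 - t^2) ^ (κ - 1)))

/-- an `ℝ≥0∞`-valued `L^p` norm for `ℝ≥0∞`-valued functions -/
def lpNormE {α : Type*} [MeasurableSpace α] (g : α → ℝ≥0∞) (p : ℝ≥0∞) (μ : Measure α) : ℝ≥0∞ :=
  if p = ∞ then essSup g μ else (∫⁻ x, g x ^ p.toReal ∂μ) ^ (1 / p.toReal)

/-- the Hardy–Littlewood maximal operator over cubes centered at `x` -/
def HLmax (d : ℕ) (f : (Fin d → ℝ) → ℝ) (x : Fin d → ℝ) : ℝ≥0∞ :=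
  ⨆ (r : ℝ) (_ : 0 < r),
    (volume {y : Fin d → ℝ | ∀ j, |y j - x j| < r})⁻¹ *
      ∫⁻ y in {y : Fin d → ℝ | ∀ j, |y j - x j| < r}, ENNReal.ofReal |f y| ∂volume

section DunklAux

lemma measurable_densK (κ : ℝ) (hκ : 0 ≤ κ) :
    Measurable fun t : ℝ => ENNReal.ofReal (|t| ^ (2 * κ)) :=
  (((Real.continuous_rpow_const (by linarith)).comp continuous_abs).measurable).ennreal_ofReal

lemma lintegral_pi_prod : ∀ {n : ℕ} (h : Fin n → ℝ → ℝ≥0∞), (∀ i, Measurable (h i)) →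
    ∫⁻ x : Fin n → ℝ, ∏ i, h i (x i) = ∏ i, ∫⁻ t, h i t := by
  intro n
  induction n with
  | zero =>
      intro h _
      simp [volume_pi, Finset.univ_eq_empty, lintegral_const, Measure.pi_empty_univ]
  | succ n ih =>
      intro h hm
      have A := ((measurePreserving_piFinSuccAbove
        (fun _ : Fin (n+1) => (volume : Measure ℝ)) 0).symm)
      rw [volume_pi, ← A.lintegral_comp_emb (MeasurableEquiv.measurableEmbedding _)]
      have key : ∀ p : ℝ × (Fin n → ℝ),
          (∏ i, h i (((MeasurableEquiv.piFinSuccAbove (fun _ => ℝ) 0).symm p) i))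
            = h 0 p.1 * ∏ j, h j.succ (p.2 j) := by
        intro p
        rw [Fin.prod_univ_succ]
        simp [MeasurableEquiv.piFinSuccAbove_symm_apply, Fin.insertNth_zero,
          Fin.zero_succAbove, Fin.cons_succ, Fin.cons_zero]
      simp_rw [key]
      have hg : Measurable fun (y : Fin n → ℝ) => ∏ j, h j.succ (y j) :=
        Finset.measurable_prod _ fun j _ => (hm j.succ).comp (measurable_pi_apply j)
      rw [MeasureTheory.lintegral_prod_mul (hm 0).aemeasurable hg.aemeasurable]
      rw [← volume_pi, ih (fun j => h j.succ) (fun j => hm j.succ), Fin.prod_univ_succ]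

lemma muK_pi {d : ℕ} (κ : Fin d → ℝ) (hκ : ∀ j, 0 ≤ κ j) (S : Fin d → Set ℝ)
    (hS : ∀ j, MeasurableSet (S j)) :
    muK d κ (Set.univ.pi S) = ∏ j, muK1 (κ j) (S j) := by
  have hpi : MeasurableSet (Set.univ.pi S) := MeasurableSet.univ_pi hS
  rw [muK, withDensity_apply _ hpi]
  have : ∀ x : Fin d → ℝ, (Set.univ.pi S).indicator
      (fun x : Fin d → ℝ => ENNReal.ofReal (∏ j, |x j| ^ (2 * κ j))) x
      = ∏ j, (S j).indicator (fun t => ENNReal.ofReal (|t| ^ (2 * κ j))) (x j) := by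
    intro x
    by_cases hx : x ∈ Set.univ.pi S
    · rw [Set.indicator_of_mem hx]
      rw [ENNReal.ofReal_prod_of_nonneg (fun j _ => Real.rpow_nonneg (abs_nonneg _) _)]
      exact Finset.prod_congr rfl fun j _ =>
        (Set.indicator_of_mem (hx j (Set.mem_univ j))
          (fun t => ENNReal.ofReal (|t| ^ (2 * κ j)))).symm
    · rw [Set.indicator_of_notMem hx]
      rw [Set.mem_univ_pi] at hx
      push_neg at hx
      obtain ⟨j, hj⟩ := hx
      exact (Finset.prod_eq_zero (Finset.mem_univ j)
        (by rw [Set.indicator_of_notMem hj])).symm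
  rw [← MeasureTheory.lintegral_indicator hpi]
  simp_rw [this]
  rw [lintegral_pi_prod _ (fun j => ((measurable_densK (κ j) (hκ j)).indicator (hS j)))]
  exact Finset.prod_congr rfl fun j _ => by
    rw [MeasureTheory.lintegral_indicator (hS j), muK1, withDensity_apply _ (hS j)]

lemma rpow_sub_bounds {p q s : ℝ} (hp : 0 ≤ p) (hpq : p ≤ q) (hs : 1 ≤ s) :
    s * p ^ (s-1) * (q - p) ≤ q ^ s - p ^ s ∧ q ^ s - p ^ s ≤ s * q ^ (s-1) * (q - p) := by
  rcases eq_or_lt_of_le hpq with rfl | hlt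
  · simp
  · have hcont : ContinuousOn (fun x : ℝ => x ^ s) (Set.Icc p q) :=
      (Real.continuous_rpow_const (by linarith)).continuousOn
    have hderiv : ∀ x ∈ Set.Ioo p q,
        HasDerivAt (fun x : ℝ => x ^ s) (s * x ^ (s-1)) x := by
      intro x _
      simpa using Real.hasDerivAt_rpow_const (p := s) (Or.inr hs)
    obtain ⟨c, hc, hceq⟩ := exists_hasDerivAt_eq_slope (fun x : ℝ => x ^ s)
      (fun x => s * x ^ (s-1)) hlt hcont hderiv
    have hqp : 0 < q - p := by linarith
    have hval : q ^ s - p ^ s = s * c ^ (s-1) * (q - p) := by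
      field_simp at hceq
      linarith [hceq]
    have hc0 : 0 ≤ c := le_trans hp hc.1.le
    have h1 : c ^ (s-1) ≤ q ^ (s-1) := Real.rpow_le_rpow hc0 hc.2.le (by linarith)
    have h2 : p ^ (s-1) ≤ c ^ (s-1) := Real.rpow_le_rpow hp hc.1.le (by linarith)
    have hs0 : 0 < s := by linarith
    constructor
    · rw [hval]
      have := mul_le_mul_of_nonneg_right (mul_le_mul_of_nonneg_left h2 hs0.le) hqp.le
      linarith
    · rw [hval]
      have := mul_le_mul_of_nonneg_right (mul_le_mul_of_nonneg_left h1 hs0.le) hqp.le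
      linarith

lemma rpow_superadd {x y s : ℝ} (hx : 0 ≤ x) (hy : 0 ≤ y) (hs : 1 ≤ s) :
    x ^ s + y ^ s ≤ (x + y) ^ s := by
  have := NNReal.add_rpow_le_rpow_add (x.toNNReal) (y.toNNReal) hs
  have h := NNReal.coe_le_coe.mpr this
  rw [NNReal.coe_add, NNReal.coe_rpow, NNReal.coe_rpow, NNReal.coe_rpow, NNReal.coe_add] at h
  rwa [Real.coe_toNNReal _ hx, Real.coe_toNNReal _ hy] at h

/-- the per-coordinate quantity `(a+r)^s - max(0,a-r)^s` -/
def phiv (s a r : ℝ) : ℝ := (a + r) ^ s - (max 0 (a - r)) ^ s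

lemma phiv_up {s a r : ℝ} (hs : 1 ≤ s) (ha : 0 ≤ a) (hr : 0 < r) :
    phiv s a r ≤ 2 * s * (r * (a + r) ^ (s - 1)) := by
  set b := max 0 (a - r) with hb
  have hb0 : 0 ≤ b := le_max_left _ _
  have hbar : a - r ≤ b := le_max_right _ _
  have hbq : b ≤ a + r := by
    rcases max_cases 0 (a - r) with ⟨h1, _⟩ | ⟨h1, _⟩ <;> rw [hb, h1] <;> linarith
  have := (rpow_sub_bounds hb0 hbq hs).2
  have h2 : s * (a+r) ^ (s-1) * ((a + r) - b) ≤ s * (a+r) ^ (s-1) * (2*r) := by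
    apply mul_le_mul_of_nonneg_left (by linarith)
    positivity
  unfold phiv
  rw [← hb]
  nlinarith [this, h2]

lemma phiv_low {s a r : ℝ} (hs : 1 ≤ s) (ha : 0 ≤ a) (hr : 0 < r) :
    2 ^ (1 - s) * (r * (a + r) ^ (s - 1)) ≤ phiv s a r := by
  have h2s : (0:ℝ) < 2 ^ (s - 1) := Real.rpow_pos_of_pos (by norm_num) _
  have h1s : (2:ℝ) ^ (1 - s) = (2 ^ (s-1))⁻¹ := by
    rw [← Real.rpow_neg (by norm_num)]; ring_nf
  have har : 0 < a + r := by linarith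
  rcases le_or_gt a r with hale | hagt
  · have hb : max 0 (a - r) = 0 := max_eq_left (by linarith)
    unfold phiv
    rw [hb, Real.zero_rpow (by linarith), sub_zero]
    have : (a + r) ^ s = (a + r) ^ (s - 1) * (a + r) := by
      rw [← Real.rpow_add_one (ne_of_gt har)]; ring_nf
    rw [this]
    have h21 : (2:ℝ) ^ (1 - s) ≤ 1 :=
      Real.rpow_le_one_of_one_le_of_nonpos (by norm_num) (by linarith)
    have hpow : (0:ℝ) ≤ (a + r) ^ (s - 1) := Real.rpow_nonneg har.le _
    nlinarith [mul_le_mul_of_nonneg_right h21 (mul_nonneg hr.le hpow)]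
  · have hb : max 0 (a - r) = a - r := max_eq_right (by linarith)
    have hstep1 : (a - r) ^ s ≤ a ^ s :=
      Real.rpow_le_rpow (by linarith) (by linarith) (by linarith)
    have hstep2 : s * a ^ (s-1) * r ≤ (a + r) ^ s - a ^ s := by
      have := (rpow_sub_bounds (p := a) (q := a + r) (by linarith) (by linarith) hs).1
      simpa using this
    have hhalf : (a + r) / 2 ≤ a := by linarith
    have hmono : ((a + r)/2) ^ (s-1) ≤ a ^ (s-1) :=
      Real.rpow_le_rpow (by positivity) hhalf (by linarith)
    have e : 2 ^ (1-s) * (a + r) ^ (s-1) = ((a+r)/2) ^ (s-1) := by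
      rw [Real.div_rpow har.le (by norm_num : (0:ℝ) ≤ 2), h1s, inv_mul_eq_div]
    have hnnA : (0:ℝ) ≤ a ^ (s-1) := Real.rpow_nonneg (by linarith) _
    have : 2 ^ (1-s) * (r * (a + r) ^ (s-1)) = r * (((a+r)/2) ^ (s-1)) := by
      rw [← e]; ring
    rw [this]
    unfold phiv
    rw [hb]
    have h4 : r * (((a+r)/2) ^ (s-1)) ≤ r * a ^ (s-1) :=
      mul_le_mul_of_nonneg_left hmono hr.le
    nlinarith [hstep1, hstep2, h4, mul_nonneg hr.le hnnA]

lemma phiv_rs {s a r : ℝ} (hs : 1 ≤ s) (ha : 0 ≤ a) (hr : 0 < r) :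
    r ^ s ≤ phiv s a r := by
  have hb : (max 0 (a - r)) ^ s ≤ a ^ s := by
    apply Real.rpow_le_rpow (le_max_left _ _) _ (by linarith)
    rcases max_cases 0 (a-r) with ⟨h1,_⟩ | ⟨h1,_⟩ <;> rw [h1] <;> linarith
  have := rpow_superadd ha hr.le hs
  unfold phiv
  linarith

lemma phiv_pos {s a r : ℝ} (hs : 1 ≤ s) (ha : 0 ≤ a) (hr : 0 < r) :
    0 < phiv s a r :=
  lt_of_lt_of_le (Real.rpow_pos_of_pos hr _) (phiv_rs hs ha hr)

lemma phiv_doubling {s a r : ℝ} (hs : 1 ≤ s) (ha : 0 ≤ a) (hr : 0 < r) :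
    phiv s a (5*r) ≤ s * 10 ^ s * phiv s a r := by
  have h1 : phiv s a (5*r) ≤ 2 * s * ((5*r) * (a + 5*r) ^ (s - 1)) :=
    phiv_up hs ha (by linarith)
  have h2 : (a + 5*r) ^ (s-1) ≤ 5 ^ (s-1) * (a + r) ^ (s-1) := by
    rw [← Real.mul_rpow (by norm_num) (by linarith)]
    exact Real.rpow_le_rpow (by linarith) (by linarith) (by linarith)
  have h3 : 2 ^ (1 - s) * (r * (a + r) ^ (s - 1)) ≤ phiv s a r :=
    phiv_low hs ha hr
  have hkey : s * 10 ^ s * (2 ^ (1 - s) * (r * (a + r) ^ (s - 1)))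
      = 2 * s * ((5*r) * (5 ^ (s-1) * (a + r) ^ (s-1))) := by
    have e1 : (10:ℝ) ^ s = 2 ^ s * 5 ^ s := by
      rw [← Real.mul_rpow (by norm_num) (by norm_num)]; norm_num
    have e2 : (2:ℝ) ^ s * 2 ^ (1-s) = 2 := by
      rw [← Real.rpow_add (by norm_num)]; norm_num
    have e3 : (5:ℝ) ^ s = 5 * 5 ^ (s-1) := by
      nth_rewrite 1 [show s = 1 + (s-1) by ring]
      rw [Real.rpow_add (by norm_num), Real.rpow_one]
    rw [e1, e3]
    linear_combination (s * 5 * 5^(s-1) * (r * (a+r)^(s-1))) * e2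
  have hnn : 0 ≤ s * 10 ^ s := by positivity
  calc phiv s a (5*r) ≤ 2 * s * ((5*r) * (a + 5*r) ^ (s - 1)) := h1
    _ ≤ 2 * s * ((5*r) * (5 ^ (s-1) * (a + r) ^ (s-1))) := by
        apply mul_le_mul_of_nonneg_left _ (by positivity)
        apply mul_le_mul_of_nonneg_left h2 (by positivity)
    _ = s * 10 ^ s * (2 ^ (1 - s) * (r * (a + r) ^ (s - 1))) := hkey.symm
    _ ≤ s * 10 ^ s * phiv s a r := mul_le_mul_of_nonneg_left h3 hnn

lemma muK1_Ico {κ b c : ℝ} (hκ : 0 ≤ κ) (hb : 0 ≤ b) (hbc : b ≤ c) :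
    muK1 κ (Set.Ico b c) = ENNReal.ofReal ((c ^ (2*κ+1) - b ^ (2*κ+1)) / (2*κ+1)) := by
  rw [muK1, withDensity_apply _ measurableSet_Ico]
  rw [setLIntegral_congr (Ico_ae_eq_Ioc (μ := volume) (a := b) (b := c))]
  have hcongr : ∫⁻ t in Set.Ioc b c, ENNReal.ofReal (|t| ^ (2*κ)) ∂volume
      = ∫⁻ t in Set.Ioc b c, ENNReal.ofReal (t ^ (2*κ)) ∂volume := by
    apply setLIntegral_congr_fun measurableSet_Ioc
    intro t ht
    dsimp only
    rw [abs_of_pos (lt_of_le_of_lt hb ht.1)]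
  rw [hcongr]
  have hint : IntegrableOn (fun t : ℝ => t ^ (2*κ)) (Set.Ioc b c) volume := by
    rw [← intervalIntegrable_iff_integrableOn_Ioc_of_le hbc]
    exact intervalIntegral.intervalIntegrable_rpow' (by linarith)
  have hnn : 0 ≤ᵐ[volume.restrict (Set.Ioc b c)] fun t : ℝ => t ^ (2*κ) := by
    rw [Filter.EventuallyLE, ae_restrict_iff' measurableSet_Ioc]
    filter_upwards with t ht
    exact Real.rpow_nonneg (le_trans hb ht.1.le) _
  rw [← MeasureTheory.ofReal_integral_eq_lintegral_ofReal hint hnn]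
  congr 1
  rw [← intervalIntegral.integral_of_le hbc]
  rw [integral_rpow (Or.inl (by linarith))]

lemma muK1_neg (κ : ℝ) (A : Set ℝ) (hA : MeasurableSet A) :
    muK1 κ (Neg.neg ⁻¹' A) = muK1 κ A := by
  have hpre : MeasurableSet (Neg.neg ⁻¹' A) := measurable_neg hA
  rw [muK1, withDensity_apply _ hpre, withDensity_apply _ hA]
  rw [← MeasureTheory.lintegral_indicator hpre, ← MeasureTheory.lintegral_indicator hA]
  have hemb : MeasurableEmbedding (fun t : ℝ => -t) := (Homeomorph.neg ℝ).measurableEmbedding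
  have hmp := (Measure.measurePreserving_neg (volume : Measure ℝ)).lintegral_comp_emb hemb
    (A.indicator fun u => ENNReal.ofReal (|u| ^ (2*κ)))
  rw [← hmp]
  apply lintegral_congr
  intro t
  by_cases ht : -t ∈ A
  · rw [Set.indicator_of_mem ht, Set.indicator_of_mem (by exact ht), abs_neg]
  · rw [Set.indicator_of_notMem ht, Set.indicator_of_notMem (by exact ht)]

/-- value of the one-dimensional interval measure -/
def vjK (κ a r : ℝ) : ℝ := phiv (2*κ+1) a r / (2*κ+1)

lemma vjK_pos {κ a r : ℝ} (hκ : 0 ≤ κ) (ha : 0 ≤ a) (hr : 0 < r) : 0 < vjK κ a r :=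
  div_pos (phiv_pos (by linarith) ha hr) (by linarith)

lemma vjK_doubling {κ a r : ℝ} (hκ : 0 ≤ κ) (ha : 0 ≤ a) (hr : 0 < r) :
    vjK κ a (5*r) ≤ ((2*κ+1) * 10 ^ (2*κ+1)) * vjK κ a r := by
  unfold vjK
  have h := phiv_doubling (s := 2*κ+1) (by linarith) ha hr
  have hpos : (0:ℝ) < 2*κ+1 := by linarith
  rw [div_le_iff₀ hpos]
  have e : (2*κ+1) * 10 ^ (2*κ+1) * (phiv (2*κ+1) a r / (2*κ+1)) * (2*κ+1)
      = (2*κ+1) * 10 ^ (2*κ+1) * phiv (2*κ+1) a r := by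
    field_simp
  rw [e]
  exact h

lemma muK1_Iset {κ x r : ℝ} (hκ : 0 ≤ κ) (hr : 0 < r) :
    muK1 κ (Iset x r) = ENNReal.ofReal (vjK κ |x| r) := by
  rw [Iset, muK1_Ico hκ (le_max_left _ _)
    (max_le (by positivity) (by linarith [abs_nonneg x]))]
  rfl

lemma muK1_absIset_le {κ x r : ℝ} (hκ : 0 ≤ κ) (hr : 0 < r) :
    muK1 κ (abs ⁻¹' (Iset x r)) ≤ 2 * ENNReal.ofReal (vjK κ |x| r) := by
  set b := max 0 (|x| - r) with hbdef
  set c := |x| + r with hcdef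
  have hsub : abs ⁻¹' (Iset x r) ⊆ Set.Ico b c ∪ Set.Ioc (-c) (-b) := by
    intro t ht
    simp only [Set.mem_preimage, Iset, Set.mem_Ico, ← hbdef, ← hcdef] at ht
    rcases le_or_gt 0 t with h0 | h0
    · left; rw [abs_of_nonneg h0] at ht; exact ht
    · right; rw [abs_of_neg h0] at ht; constructor <;> [linarith [ht.2]; linarith [ht.1]]
  have hneg : Set.Ioc (-c) (-b) = Neg.neg ⁻¹' (Set.Ico b c) := by
    ext t
    simp only [Set.mem_Ioc, Set.mem_preimage, Set.mem_Ico]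
    constructor <;> intro h <;> constructor <;> linarith [h.1, h.2]
  have hb0 : (0:ℝ) ≤ b := le_max_left _ _
  have hbc : b ≤ c := max_le (by positivity) (by linarith [abs_nonneg x])
  have hIco : muK1 κ (Set.Ico b c) = ENNReal.ofReal (vjK κ |x| r) := by
    rw [← muK1_Iset hκ hr (x := x)]; rfl
  calc muK1 κ (abs ⁻¹' (Iset x r)) ≤ muK1 κ (Set.Ico b c ∪ Set.Ioc (-c) (-b)) :=
        measure_mono hsub
    _ ≤ muK1 κ (Set.Ico b c) + muK1 κ (Set.Ioc (-c) (-b)) := measure_union_le _ _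
    _ = muK1 κ (Set.Ico b c) + muK1 κ (Set.Ico b c) := by
        rw [hneg, muK1_neg _ _ measurableSet_Ico]
    _ = 2 * ENNReal.ofReal (vjK κ |x| r) := by rw [hIco, two_mul]

end DunklAux

section MainAux

variable {d : ℕ} {κ : Fin d → ℝ}

/-- the symmetrized rectangle -/
def BsK (d : ℕ) (x : Fin d → ℝ) (r : ℝ) : Set (Fin d → ℝ) :=
  {y | (fun j => |y j|) ∈ Rset d x r}

lemma BsK_eq (x : Fin d → ℝ) (r : ℝ) :
    BsK d x r = Set.univ.pi (fun j => abs ⁻¹' Iset (x j) r) := by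
  ext y
  simp [BsK, Rset, Set.mem_univ_pi]

lemma mem_BsK {y x : Fin d → ℝ} {r : ℝ} :
    y ∈ BsK d x r ↔ ∀ j, max 0 (|x j| - r) ≤ |y j| ∧ |y j| < |x j| + r := by
  simp [BsK, Rset, Iset, Set.mem_univ_pi, Set.mem_Ico]

lemma mem_BsK_self {x : Fin d → ℝ} {r : ℝ} (hr : 0 < r) : x ∈ BsK d x r := by
  rw [mem_BsK]
  intro j
  exact ⟨max_le (abs_nonneg _) (by linarith), by linarith⟩

lemma measurableSet_BsK (x : Fin d → ℝ) (r : ℝ) : MeasurableSet (BsK d x r) := by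
  rw [BsK_eq]
  exact MeasurableSet.univ_pi fun j => measurable_abs measurableSet_Ico

lemma muK_Rset (hκ : ∀ j, 0 ≤ κ j) (x : Fin d → ℝ) {r : ℝ} (hr : 0 < r) :
    muK d κ (Rset d x r) = ENNReal.ofReal (∏ j, vjK (κ j) |x j| r) := by
  rw [Rset]
  simp only [Iset]
  rw [muK_pi κ hκ _ (fun j => measurableSet_Ico)]
  rw [ENNReal.ofReal_prod_of_nonneg (fun j _ => (vjK_pos (hκ j) (abs_nonneg _) hr).le)]
  exact Finset.prod_congr rfl fun j _ => muK1_Iset (hκ j) hr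

lemma muK_BsK_le (hκ : ∀ j, 0 ≤ κ j) (x : Fin d → ℝ) {r : ℝ} (hr : 0 < r) :
    muK d κ (BsK d x r) ≤ 2^d * ENNReal.ofReal (∏ j, vjK (κ j) |x j| r) := by
  rw [BsK_eq]
  simp only [Iset]
  rw [muK_pi κ hκ _ (fun j => measurable_abs measurableSet_Ico)]
  calc ∏ j, muK1 (κ j) (abs ⁻¹' Iset (x j) r)
      ≤ ∏ j, (2 * ENNReal.ofReal (vjK (κ j) |x j| r)) :=
        Finset.prod_le_prod' fun j _ => muK1_absIset_le (hκ j) hr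
    _ = 2^d * ∏ j, ENNReal.ofReal (vjK (κ j) |x j| r) := by
        rw [Finset.prod_mul_distrib, Finset.prod_const, Finset.card_univ, Fintype.card_fin]
    _ = 2^d * ENNReal.ofReal (∏ j, vjK (κ j) |x j| r) := by
        rw [ENNReal.ofReal_prod_of_nonneg (fun j _ => (vjK_pos (hκ j) (abs_nonneg _) hr).le)]

lemma muK_BsK_doubling (hκ : ∀ j, 0 ≤ κ j) (x : Fin d → ℝ) {r : ℝ} (hr : 0 < r) :
    muK d κ (BsK d x (5*r)) ≤
      ENNReal.ofReal (2^d * ∏ j, ((2*κ j+1) * 10 ^ (2*κ j+1))) * muK d κ (Rset d x r) := by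
  have h5 : 0 < 5*r := by linarith
  have hvnn : ∀ j, 0 ≤ vjK (κ j) |x j| r := fun j => (vjK_pos (hκ j) (abs_nonneg _) hr).le
  have hDnn : ∀ j, 0 ≤ (2*κ j+1) * 10 ^ (2*κ j+1) := by
    intro j
    have := hκ j
    positivity
  calc muK d κ (BsK d x (5*r))
      ≤ 2^d * ENNReal.ofReal (∏ j, vjK (κ j) |x j| (5*r)) := muK_BsK_le hκ x h5
    _ ≤ 2^d * ENNReal.ofReal (∏ j, ((2*κ j+1) * 10 ^ (2*κ j+1) * vjK (κ j) |x j| r)) := by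
        apply mul_le_mul_right
        apply ENNReal.ofReal_le_ofReal
        exact Finset.prod_le_prod (fun j _ => (vjK_pos (hκ j) (abs_nonneg _) h5).le)
          (fun j _ => vjK_doubling (hκ j) (abs_nonneg _) hr)
    _ = ENNReal.ofReal (2^d * ∏ j, ((2*κ j+1) * 10 ^ (2*κ j+1))) * muK d κ (Rset d x r) := by
        rw [muK_Rset hκ x hr, Finset.prod_mul_distrib,
          ENNReal.ofReal_mul (Finset.prod_nonneg fun j _ => hDnn j),
          ENNReal.ofReal_mul (by positivity : (0:ℝ) ≤ (2:ℝ)^d),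
          ENNReal.ofReal_pow (by norm_num : (0:ℝ) ≤ 2),
          ENNReal.ofReal_ofNat]
        ring

lemma BsK_engulf (x x' : Fin d → ℝ) {r r' : ℝ} (hr : 0 < r) (hr' : 0 < r') (h2 : r' ≤ 2*r)
    (hne : (BsK d x r ∩ BsK d x' r').Nonempty) : BsK d x' r' ⊆ BsK d x (5*r) := by
  obtain ⟨y0, hy0x, hy0x'⟩ := hne
  intro y hy
  rw [mem_BsK] at hy0x hy0x' hy ⊢
  intro j
  obtain ⟨h1, h2'⟩ := hy0x j
  obtain ⟨h3, h4⟩ := hy0x' j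
  obtain ⟨h5, h6⟩ := hy j
  have hb1 : |x' j| - r' ≤ |y0 j| := le_trans (le_max_right _ _) h3
  have ha1 : |x j| - r ≤ |y0 j| := le_trans (le_max_right _ _) h1
  have hb5 : |x' j| - r' ≤ |y j| := le_trans (le_max_right _ _) h5
  constructor
  · exact max_le (abs_nonneg _) (by linarith)
  · linarith

end MainAux

/-- Weak type `(1,1)` inequality for the weighted maximal operator `M_κ^R`. -/
theorem MR_weak_type_one_one
    (d : ℕ) (hd : 1 ≤ d) (κ : Fin d → ℝ) (hκ : ∀ j, 0 ≤ κ j) :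
    ∃ C : ℝ, 0 < C ∧ ∀ f : (Fin d → ℝ) → ℝ, Integrable f (muK d κ) →
      ∀ lam : ℝ, 0 < lam →
      muK d κ {x | ENNReal.ofReal lam < MR d κ f x} ≤
        (ENNReal.ofReal C / ENNReal.ofReal lam) *
          ∫⁻ y, ENNReal.ofReal |f y| ∂(muK d κ) := by
  classical
  set Pbig : ℝ := ∏ j, (2 * κ j + 1) with hPbig
  have hPbigpos : 0 < Pbig := Finset.prod_pos fun j _ => by linarith [hκ j]
  set Dprod : ℝ := ∏ j, ((2*κ j+1) * 10 ^ (2*κ j+1)) with hDprod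
  have hDpos : 0 < Dprod := Finset.prod_pos fun j _ => by
    have := hκ j
    positivity
  refine ⟨2^d * Dprod, by positivity, ?_⟩
  intro f hf lam hlam
  set μ := muK d κ with hμ
  set g : (Fin d → ℝ) → ℝ≥0∞ := fun y => ENNReal.ofReal |f y| with hgdef
  set T := ∫⁻ y, g y ∂μ with hTdef
  have hTfin : T ≠ ∞ := by
    have h1 := hf.2
    rw [HasFiniteIntegral] at h1
    have : T = ∫⁻ y, (‖f y‖₊ : ℝ≥0∞) ∂μ := by
      apply lintegral_congr
      intro y
      show ENNReal.ofReal |f y| = (‖f y‖₊ : ℝ≥0∞)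
      rw [← Real.norm_eq_abs]
      exact ofReal_norm _
    rw [this]
    exact h1.ne
  set L := ENNReal.ofReal lam with hLdef
  have hL0 : L ≠ 0 := by
    rw [hLdef, ne_eq, ENNReal.ofReal_eq_zero]
    linarith
  have hLtop : L ≠ ∞ := ENNReal.ofReal_ne_top
  set E := {x | L < MR d κ f x} with hEdef
  set P : (Fin d → ℝ) → ℝ → Prop := fun x r =>
    0 < r ∧ L < (μ (Rset d x r))⁻¹ * ∫⁻ y in BsK d x r, g y ∂μ with hPdef
  have hE : ∀ x ∈ E, ∃ r, P x r := by
    intro x hx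
    have hx' : L < MR d κ f x := hx
    rw [MR] at hx'
    obtain ⟨r, hr⟩ := lt_iSup_iff.mp hx'
    obtain ⟨hr0, hlt⟩ := lt_iSup_iff.mp hr
    exact ⟨r, hr0, hlt⟩
  set rr : (Fin d → ℝ) → ℝ := fun x => if h : ∃ r, P x r then h.choose else 1 with hrrdef
  have hrrP : ∀ x ∈ E, P x (rr x) := by
    intro x hx
    rw [hrrdef]
    simp only
    rw [dif_pos (hE x hx)]
    exact (hE x hx).choose_spec
  have hrr0 : ∀ x ∈ E, 0 < rr x := fun x hx => (hrrP x hx).1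
  have hμReq : ∀ x ∈ E, μ (Rset d x (rr x)) = ENNReal.ofReal (∏ j, vjK (κ j) |x j| (rr x)) :=
    fun x hx => muK_Rset hκ x (hrr0 x hx)
  have hvprodpos : ∀ x ∈ E, 0 < ∏ j, vjK (κ j) |x j| (rr x) :=
    fun x hx => Finset.prod_pos fun j _ => vjK_pos (hκ j) (abs_nonneg _) (hrr0 x hx)
  have hμR0 : ∀ x ∈ E, μ (Rset d x (rr x)) ≠ 0 := by
    intro x hx
    rw [hμReq x hx, ne_eq, ENNReal.ofReal_eq_zero, not_le]
    exact hvprodpos x hx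
  have hμRtop : ∀ x ∈ E, μ (Rset d x (rr x)) ≠ ∞ := by
    intro x hx
    rw [hμReq x hx]
    exact ENNReal.ofReal_ne_top
  have hLmu : ∀ x ∈ E, L * μ (Rset d x (rr x)) < ∫⁻ y in BsK d x (rr x), g y ∂μ := by
    intro x hx
    have h := (hrrP x hx).2
    calc L * μ (Rset d x (rr x))
        < ((μ (Rset d x (rr x)))⁻¹ * ∫⁻ y in BsK d x (rr x), g y ∂μ) * μ (Rset d x (rr x)) :=
          ENNReal.mul_lt_mul_left (hμR0 x hx) (hμRtop x hx) h
      _ = ∫⁻ y in BsK d x (rr x), g y ∂μ := by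
          rw [mul_comm _ (∫⁻ y in BsK d x (rr x), g y ∂μ), mul_assoc,
            ENNReal.inv_mul_cancel (hμR0 x hx) (hμRtop x hx), mul_one]
  have hμRle : ∀ x ∈ E, μ (Rset d x (rr x)) ≤ L⁻¹ * ∫⁻ y in BsK d x (rr x), g y ∂μ := by
    intro x hx
    calc μ (Rset d x (rr x)) = L⁻¹ * (L * μ (Rset d x (rr x))) := by
          rw [← mul_assoc, ENNReal.inv_mul_cancel hL0 hLtop, one_mul]
      _ ≤ L⁻¹ * ∫⁻ y in BsK d x (rr x), g y ∂μ := mul_le_mul_right (hLmu x hx).le _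
  have hIT : ∀ x : Fin d → ℝ, ∫⁻ y in BsK d x (rr x), g y ∂μ ≤ T :=
    fun x => setLIntegral_le_lintegral _ _
  set R0 : ℝ := max 1 (Pbig * (L⁻¹ * T).toReal) with hR0def
  have hrle : ∀ x ∈ E, rr x ≤ R0 := by
    intro x hx
    rcases le_or_gt (rr x) 1 with h | h
    · exact le_trans h (le_max_left _ _)
    · refine le_trans ?_ (le_max_right _ _)
      have hr1 : (1:ℝ) ≤ rr x := h.le
      have hrpos := hrr0 x hx
      have hvge : ∀ j, rr x / (2*κ j+1) ≤ vjK (κ j) |x j| (rr x) := by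
        intro j
        have hsj : (0:ℝ) < 2*κ j+1 := by linarith [hκ j]
        have hphi : rr x ≤ phiv (2*κ j+1) |x j| (rr x) := by
          have h1 : rr x ^ (1:ℝ) ≤ rr x ^ (2*κ j+1) :=
            Real.rpow_le_rpow_of_exponent_le hr1 (by linarith [hκ j])
          rw [Real.rpow_one] at h1
          exact le_trans h1 (phiv_rs (by linarith [hκ j]) (abs_nonneg _) hrpos)
        unfold vjK
        exact (div_le_div_iff_of_pos_right hsj).mpr hphi
      have hprod : rr x / Pbig ≤ ∏ j, vjK (κ j) |x j| (rr x) := by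
        have hstep : rr x / Pbig ≤ rr x ^ d / Pbig :=
          (div_le_div_iff_of_pos_right hPbigpos).mpr (le_self_pow₀ hr1 (by omega))
        have heq : rr x ^ d / Pbig = ∏ j, (rr x / (2*κ j + 1)) := by
          rw [Finset.prod_div_distrib, Finset.prod_const, Finset.card_univ, Fintype.card_fin]
        refine le_trans hstep ?_
        rw [heq]
        exact Finset.prod_le_prod (fun j _ => div_nonneg (by linarith) (by linarith [hκ j])) (fun j _ => hvge j)
      have hofr : ENNReal.ofReal (rr x / Pbig) ≤ L⁻¹ * T := by
        calc ENNReal.ofReal (rr x / Pbig) ≤ ENNReal.ofReal (∏ j, vjK (κ j) |x j| (rr x)) :=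
              ENNReal.ofReal_le_ofReal hprod
          _ = μ (Rset d x (rr x)) := (hμReq x hx).symm
          _ ≤ L⁻¹ * ∫⁻ y in BsK d x (rr x), g y ∂μ := hμRle x hx
          _ ≤ L⁻¹ * T := mul_le_mul_right (hIT x) _
      have hfin : L⁻¹ * T ≠ ∞ :=
        ENNReal.mul_ne_top (ENNReal.inv_ne_top.mpr hL0) hTfin
      have := (ENNReal.ofReal_le_iff_le_toReal hfin).mp hofr
      rw [div_le_iff₀ hPbigpos] at this
      linarith [this]
  obtain ⟨u, hut, hdisj, hcov⟩ := Vitali.exists_disjoint_subfamily_covering_enlargement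
    (fun x => BsK d x (rr x)) E rr 2 one_lt_two (fun x hx => (hrr0 x hx).le) R0 hrle
    (fun x hx => ⟨x, mem_BsK_self (hrr0 x hx)⟩)
  -- countability of u
  set ν := μ.withDensity g with hνdef
  have hνB : ∀ x : Fin d → ℝ, ∀ r, ν (BsK d x r) = ∫⁻ y in BsK d x r, g y ∂μ :=
    fun x r => withDensity_apply g (measurableSet_BsK x r)
  have hνuniv : ν Set.univ = T := by
    rw [hνdef, withDensity_apply g MeasurableSet.univ, Measure.restrict_univ]
  set As : (Fin d → ℝ) → Set (Fin d → ℝ) :=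
    fun b => if b ∈ u then BsK d b (rr b) else ∅ with hAsdef
  have hAs : ∀ b, As b = if b ∈ u then BsK d b (rr b) else ∅ := fun b => rfl
  have hAsmeas : ∀ b, MeasurableSet (As b) := by
    intro b
    rw [hAs b]
    by_cases hb : b ∈ u
    · rw [if_pos hb]; exact measurableSet_BsK _ _
    · rw [if_neg hb]; exact MeasurableSet.empty
  have hAsdisj : Pairwise (Function.onFun Disjoint As) := by
    intro b b' hbb'
    simp only [Function.onFun]
    rw [hAs b, hAs b']
    by_cases hb : b ∈ u
    · by_cases hb' : b' ∈ u
      · rw [if_pos hb, if_pos hb']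
        exact hdisj hb hb' hbb'
      · rw [if_neg hb']; exact disjoint_bot_right
    · rw [if_neg hb]; exact disjoint_bot_left
  have hAsfin : ν (⋃ b, As b) ≠ ∞ := by
    refine ne_top_of_le_ne_top ?_ (measure_mono (Set.subset_univ _))
    rw [hνuniv]; exact hTfin
  have hcnt : u.Countable := by
    have key := MeasureTheory.Measure.countable_meas_pos_of_disjoint_of_meas_iUnion_ne_top
      (μ := ν) hAsmeas hAsdisj hAsfin
    refine key.mono ?_
    intro b hb
    have hAb : As b = BsK d b (rr b) := by rw [hAs b]; exact if_pos hb
    have hIpos : 0 < ∫⁻ y in BsK d b (rr b), g y ∂μ :=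
      lt_of_le_of_lt (zero_le (a := L * μ (Rset d b (rr b)))) (hLmu b (hut hb))
    simp only [Set.mem_setOf_eq, hAb, hνB]
    exact hIpos
  have hdisjsub : Pairwise (Function.onFun Disjoint fun b : u => BsK d (b : Fin d → ℝ) (rr b)) := by
    intro i j hij
    exact hdisj i.2 j.2 (fun h => hij (Subtype.ext h))
  have hEsub : E ⊆ ⋃ b ∈ u, BsK d b (5 * rr b) := by
    intro x hx
    obtain ⟨b, hbu, hint, hle⟩ := hcov x hx
    have hsub : BsK d x (rr x) ⊆ BsK d b (5 * rr b) := by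
      apply BsK_engulf b x (hrr0 b (hut hbu)) (hrr0 x hx) hle
      obtain ⟨y, hy1, hy2⟩ := hint
      exact ⟨y, hy2, hy1⟩
    exact Set.mem_biUnion hbu (hsub (mem_BsK_self (hrr0 x hx)))
  haveI : Countable u := hcnt.to_subtype
  calc μ E ≤ μ (⋃ b ∈ u, BsK d b (5 * rr b)) := measure_mono hEsub
    _ ≤ ∑' b : u, μ (BsK d (b : Fin d → ℝ) (5 * rr b)) := measure_biUnion_le μ hcnt _
    _ ≤ ∑' b : u, (ENNReal.ofReal (2^d * Dprod) * L⁻¹) *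
          ∫⁻ y in BsK d (b : Fin d → ℝ) (rr (b : Fin d → ℝ)), g y ∂μ := by
        apply ENNReal.tsum_le_tsum
        intro b
        have hb := hut b.2
        calc μ (BsK d (b : Fin d → ℝ) (5 * rr b))
            ≤ ENNReal.ofReal (2^d * Dprod) * μ (Rset d (b : Fin d → ℝ) (rr b)) :=
              muK_BsK_doubling hκ _ (hrr0 _ hb)
          _ ≤ ENNReal.ofReal (2^d * Dprod) *
                (L⁻¹ * ∫⁻ y in BsK d (b : Fin d → ℝ) (rr b), g y ∂μ) :=
              mul_le_mul_right (hμRle _ hb) _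
          _ = (ENNReal.ofReal (2^d * Dprod) * L⁻¹) *
                ∫⁻ y in BsK d (b : Fin d → ℝ) (rr b), g y ∂μ := by rw [mul_assoc]
    _ = (ENNReal.ofReal (2^d * Dprod) * L⁻¹) *
          ∑' b : u, ∫⁻ y in BsK d (b : Fin d → ℝ) (rr (b : Fin d → ℝ)), g y ∂μ :=
        ENNReal.tsum_mul_left
    _ ≤ (ENNReal.ofReal (2^d * Dprod) * L⁻¹) * T := by
        apply mul_le_mul_right
        rw [← MeasureTheory.lintegral_iUnion
          (fun b : u => measurableSet_BsK (b : Fin d → ℝ) (rr b)) hdisjsub g]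
        exact setLIntegral_le_lintegral _ _
    _ = (ENNReal.ofReal (2^d * Dprod) / L) * T := by rw [div_eq_mul_inv]
end
end

section
/- Let W be a positive, locally μ_κ-integrable function on ℝ^d and let μ̃_κ be the measure with dμ̃_κ = W dμ_κ. There exists a constant C > 0, depending only on κ_1,…,κ_d, such that for every measurable f and every λ > 0, μ̃_κ({x ∈ ℝ^d : M_κ^R f(x) > λ}) ≤ (C/λ) ∫_{ℝ^d} |f(y)| M_κ^R W(y) dμ_κ(y). -/
noncomputable section
open MeasureTheory Set Real
open scoped ENNReal NNReal

/-! ### Auxiliary material for the weighted weak type inequality -/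

namespace MRWeakAux

/-- per-coordinate doubling constant -/
def A0 (κ : ℝ) : ℝ := 54 ^ (2 * κ + 1) + 18 * 4 ^ (2 * κ)

lemma A0_pos {κ : ℝ} : 0 < A0 κ := by unfold A0; positivity

lemma mem_Iset_self (x : ℝ) {r : ℝ} (hr : 0 < r) : |x| ∈ Iset x r := by
  rw [Iset, Set.mem_Ico]
  exact ⟨max_le (abs_nonneg x) (by linarith), by linarith⟩

lemma Iset_sub {x y r s : ℝ} (h : abs (|x| - |y|) + r ≤ s) : Iset x r ⊆ Iset y s := by
  intro t ht
  rw [Iset, Set.mem_Ico] at ht ⊢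
  have ha : |x| - |y| ≤ abs (|x| - |y|) := le_abs_self _
  have hb : |y| - |x| ≤ abs (|x| - |y|) := by rw [abs_sub_comm]; exact le_abs_self _
  refine ⟨le_trans (max_le_max le_rfl (by linarith)) ht.1, by linarith [ht.2]⟩

lemma abs_mem_Iset {u x r : ℝ} (h : u ∈ Iset x r) : abs (u - |x|) ≤ r := by
  rw [Iset, Set.mem_Ico] at h
  have h0 : |x| - r ≤ u := le_trans (le_max_right _ _) h.1
  exact abs_sub_le_iff.mpr ⟨by linarith [h.2], by linarith⟩

lemma nonneg_of_mem_Iset {u x r : ℝ} (h : u ∈ Iset x r) : 0 ≤ u := by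
  rw [Iset, Set.mem_Ico] at h
  exact le_trans (le_max_left _ _) h.1

/-- the symmetrized rectangle -/
def Sset (d : ℕ) (x : Fin d → ℝ) (r : ℝ) : Set (Fin d → ℝ) :=
  {y | (fun j => |y j|) ∈ Rset d x r}

lemma mem_Sset {d : ℕ} {x : Fin d → ℝ} {r : ℝ} {y : Fin d → ℝ} :
    y ∈ Sset d x r ↔ ∀ j, |y j| ∈ Iset (x j) r := by
  simp [Sset, Rset, Set.mem_univ_pi]

lemma measurableSet_Rset {d : ℕ} {x : Fin d → ℝ} {r : ℝ} : MeasurableSet (Rset d x r) :=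
  MeasurableSet.univ_pi fun _ => measurableSet_Ico

lemma measurableSet_Sset {d : ℕ} {x : Fin d → ℝ} {r : ℝ} : MeasurableSet (Sset d x r) := by
  have h : Sset d x r = (fun (y : Fin d → ℝ) (j : Fin d) => |y j|) ⁻¹' (Rset d x r) := rfl
  rw [h]
  exact (measurable_pi_lambda _ fun j => (measurable_pi_apply j).abs) measurableSet_Rset

lemma Sset_sub {d : ℕ} {x y : Fin d → ℝ} {r s : ℝ} (h : ∀ j, abs (|x j| - |y j|) + r ≤ s) :
    Sset d x r ⊆ Sset d y s := fun _ hz =>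
  mem_Sset.mpr fun j => Iset_sub (h j) (mem_Sset.mp hz j)

lemma Rset_sub {d : ℕ} {x y : Fin d → ℝ} {r s : ℝ} (h : ∀ j, abs (|x j| - |y j|) + r ≤ s) :
    Rset d x r ⊆ Rset d y s :=
  Set.pi_mono fun j _ => Iset_sub (h j)

lemma self_mem_Sset {d : ℕ} {x : Fin d → ℝ} {r : ℝ} (hr : 0 < r) : x ∈ Sset d x r :=
  mem_Sset.mpr fun j => mem_Iset_self _ hr

lemma Rset_subset_Sset {d : ℕ} {x : Fin d → ℝ} {r : ℝ} : Rset d x r ⊆ Sset d x r := by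
  intro y hy
  have h : ∀ j, y j ∈ Iset (x j) r := fun j => hy j (Set.mem_univ j)
  exact mem_Sset.mpr fun j => by rw [abs_of_nonneg (nonneg_of_mem_Iset (h j))]; exact h j

lemma muK_pi_le {d : ℕ} {κ : Fin d → ℝ} {s : Fin d → Set ℝ} (hs : ∀ j, MeasurableSet (s j))
    {M : Fin d → ℝ} (hM0 : ∀ j, 0 ≤ M j) (hM : ∀ j, ∀ t ∈ s j, |t| ^ (2 * κ j) ≤ M j) :
    muK d κ (Set.univ.pi s) ≤ ENNReal.ofReal (∏ j, M j) * ∏ j, volume (s j) := by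
  rw [muK, withDensity_apply _ (MeasurableSet.univ_pi hs)]
  calc ∫⁻ x in Set.univ.pi s, ENNReal.ofReal (∏ j, |x j| ^ (2 * κ j)) ∂volume
      ≤ ∫⁻ _ in Set.univ.pi s, ENNReal.ofReal (∏ j, M j) ∂volume := by
        refine setLIntegral_mono' (MeasurableSet.univ_pi hs) fun x hx => ?_
        exact ENNReal.ofReal_le_ofReal (Finset.prod_le_prod
          (fun j _ => Real.rpow_nonneg (abs_nonneg _) _)
          (fun j _ => hM j (x j) (hx j (Set.mem_univ j))))
    _ = ENNReal.ofReal (∏ j, M j) * volume (Set.univ.pi s) := setLIntegral_const _ _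
    _ = _ := by rw [volume_pi_pi]

lemma muK_pi_ge {d : ℕ} {κ : Fin d → ℝ} {s : Fin d → Set ℝ} (hs : ∀ j, MeasurableSet (s j))
    {m : Fin d → ℝ} (hm0 : ∀ j, 0 ≤ m j) (hm : ∀ j, ∀ t ∈ s j, m j ≤ |t| ^ (2 * κ j)) :
    ENNReal.ofReal (∏ j, m j) * ∏ j, volume (s j) ≤ muK d κ (Set.univ.pi s) := by
  rw [muK, withDensity_apply _ (MeasurableSet.univ_pi hs)]
  calc ENNReal.ofReal (∏ j, m j) * ∏ j, volume (s j)
      = ∫⁻ _ in Set.univ.pi s, ENNReal.ofReal (∏ j, m j) ∂volume := by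
        rw [setLIntegral_const, volume_pi_pi]
    _ ≤ ∫⁻ x in Set.univ.pi s, ENNReal.ofReal (∏ j, |x j| ^ (2 * κ j)) ∂volume := by
        refine setLIntegral_mono' (MeasurableSet.univ_pi hs) fun x hx => ?_
        exact ENNReal.ofReal_le_ofReal (Finset.prod_le_prod
          (fun j _ => hm0 j) (fun j _ => hm j (x j) (hx j (Set.mem_univ j))))

lemma key1d {κ : ℝ} (hκ : 0 ≤ κ) (x : ℝ) {r : ℝ} (hr : 0 < r) :
    ∃ p q m M : ℝ, p < q ∧ 0 < m ∧ 0 ≤ M ∧ Set.Ico p q ⊆ Iset x r ∧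
      (∀ t ∈ Set.Ico p q, m ≤ |t| ^ (2 * κ)) ∧
      (∀ t ∈ Iset x (9 * r), |t| ^ (2 * κ) ≤ M) ∧
      M * ((|x| + 9 * r) - max 0 (|x| - 9 * r)) ≤ A0 κ * (m * (q - p)) := by
  set X := |x| with hX
  have hX0 : 0 ≤ X := abs_nonneg x
  have hexp : (0 : ℝ) ≤ 2 * κ := by linarith
  have hA4 : (0 : ℝ) < 4 ^ (2 * κ) := Real.rpow_pos_of_pos (by norm_num) _
  have hA54 : (0 : ℝ) < 54 ^ (2 * κ + 1) := Real.rpow_pos_of_pos (by norm_num) _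
  rcases le_or_gt X (18 * r) with hc | hc
  · -- X ≤ 18 r : small regime
    have hMbound : ∀ t ∈ Iset x (9 * r), |t| ^ (2 * κ) ≤ (27 * r) ^ (2 * κ) := by
      intro t ht
      have h0 : 0 ≤ t := nonneg_of_mem_Iset ht
      rw [Iset, Set.mem_Ico] at ht
      rw [abs_of_nonneg h0]
      exact Real.rpow_le_rpow h0 (by linarith [ht.2]) hexp
    have hM0 : 0 ≤ (27 * r) ^ (2 * κ) := Real.rpow_nonneg (by linarith) _
    have h54 : (27 * r) ^ (2 * κ) * (27 * r) = 54 ^ (2 * κ) * 54 * ((r / 2) ^ (2 * κ) * (r / 2)) := by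
      rw [show (27 * r : ℝ) = 54 * (r / 2) by ring,
        Real.mul_rpow (by norm_num) (by linarith)]
      ring
    have h54le : (54 : ℝ) ^ (2 * κ) * 54 ≤ A0 κ := by
      rw [A0, ← Real.rpow_add_one (by norm_num : (54:ℝ) ≠ 0)]
      nlinarith
    have hlen : (X + 9 * r) - max 0 (X - 9 * r) ≤ 27 * r := by
      have := le_max_left (0 : ℝ) (X - 9 * r); linarith
    have hlen0 : 0 ≤ (X + 9 * r) - max 0 (X - 9 * r) := by
      have h1 : max 0 (X - 9 * r) ≤ X := max_le hX0 (by linarith)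
      linarith
    rcases le_or_gt X r with hxr | hxr
    · -- X ≤ r
      refine ⟨r / 2, r, (r / 2) ^ (2 * κ), (27 * r) ^ (2 * κ), by linarith,
        Real.rpow_pos_of_pos (by linarith) _, hM0, ?_, ?_, hMbound, ?_⟩
      · rw [Iset]
        exact Set.Ico_subset_Ico (max_le (by linarith) (by linarith)) (by linarith)
      · intro t ht
        rw [Set.mem_Ico] at ht
        rw [abs_of_nonneg (by linarith [ht.1])]
        exact Real.rpow_le_rpow (by linarith) ht.1 hexp
      · calc (27 * r) ^ (2 * κ) * ((X + 9 * r) - max 0 (X - 9 * r))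
            ≤ (27 * r) ^ (2 * κ) * (27 * r) := mul_le_mul_of_nonneg_left hlen hM0
          _ = 54 ^ (2 * κ) * 54 * ((r / 2) ^ (2 * κ) * (r / 2)) := h54
          _ ≤ A0 κ * ((r / 2) ^ (2 * κ) * (r / 2)) := by
              refine mul_le_mul_of_nonneg_right h54le (by positivity)
          _ = A0 κ * ((r / 2) ^ (2 * κ) * (r - r / 2)) := by ring
    · -- r < X ≤ 18 r
      have hXpos : 0 < X := lt_trans hr hxr
      refine ⟨X, X + r, X ^ (2 * κ), (27 * r) ^ (2 * κ), by linarith,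
        Real.rpow_pos_of_pos hXpos _, hM0, ?_, ?_, hMbound, ?_⟩
      · rw [Iset]
        exact Set.Ico_subset_Ico (max_le hX0 (by linarith)) le_rfl
      · intro t ht
        rw [Set.mem_Ico] at ht
        rw [abs_of_nonneg (by linarith [ht.1])]
        exact Real.rpow_le_rpow hX0 ht.1 hexp
      · have hmono : (r / 2) ^ (2 * κ) * (r / 2) ≤ X ^ (2 * κ) * r := by
          have h1 : (r / 2) ^ (2 * κ) ≤ X ^ (2 * κ) :=
            Real.rpow_le_rpow (by linarith) (by linarith) hexp
          have h2 : (0 : ℝ) ≤ X ^ (2 * κ) := Real.rpow_nonneg hX0 _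
          nlinarith [Real.rpow_nonneg (show (0:ℝ) ≤ r/2 by linarith) (2 * κ)]
        calc (27 * r) ^ (2 * κ) * ((X + 9 * r) - max 0 (X - 9 * r))
            ≤ (27 * r) ^ (2 * κ) * (27 * r) := mul_le_mul_of_nonneg_left hlen hM0
          _ = 54 ^ (2 * κ) * 54 * ((r / 2) ^ (2 * κ) * (r / 2)) := h54
          _ ≤ A0 κ * ((r / 2) ^ (2 * κ) * (r / 2)) := by
              refine mul_le_mul_of_nonneg_right h54le (by positivity)
          _ ≤ A0 κ * (X ^ (2 * κ) * r) := by
              refine mul_le_mul_of_nonneg_left hmono A0_pos.le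
          _ = A0 κ * (X ^ (2 * κ) * (X + r - X)) := by ring
  · -- 18 r < X : far regime
    have hXpos : 0 < X := by linarith
    have hhalf : 0 ≤ X / 2 := by linarith
    refine ⟨X - r, X, (X / 2) ^ (2 * κ), (2 * X) ^ (2 * κ), by linarith,
      Real.rpow_pos_of_pos (by linarith) _, Real.rpow_nonneg (by linarith) _, ?_, ?_, ?_, ?_⟩
    · rw [Iset]
      exact Set.Ico_subset_Ico (max_le (by linarith) le_rfl) (by linarith)
    · intro t ht
      rw [Set.mem_Ico] at ht
      rw [abs_of_nonneg (by linarith [ht.1])]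
      exact Real.rpow_le_rpow hhalf (by linarith [ht.1]) hexp
    · intro t ht
      have h0 : 0 ≤ t := nonneg_of_mem_Iset ht
      rw [Iset, Set.mem_Ico] at ht
      rw [abs_of_nonneg h0]
      exact Real.rpow_le_rpow h0 (by linarith [ht.2]) hexp
    · rw [max_eq_right (by linarith : (0:ℝ) ≤ X - 9 * r),
        show (X + 9 * r) - (X - 9 * r) = 18 * r by ring,
        show X - (X - r) = r by ring,
        show (2 * X : ℝ) = 4 * (X / 2) by ring,
        Real.mul_rpow (by norm_num) hhalf]
      have h18 : 18 * (4:ℝ) ^ (2 * κ) ≤ A0 κ := by rw [A0]; nlinarith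
      nlinarith [mul_nonneg (Real.rpow_nonneg hhalf (2 * κ)) hr.le]

lemma volume_Iset {x r : ℝ} :
    volume (Iset x r) = ENNReal.ofReal ((|x| + r) - max 0 (|x| - r)) := by
  rw [Iset, Real.volume_Ico]

lemma Iset_len_nonneg {x r : ℝ} (hr : 0 ≤ r) : 0 ≤ (|x| + r) - max 0 (|x| - r) := by
  have h1 : max 0 (|x| - r) ≤ |x| := max_le (abs_nonneg x) (by linarith)
  linarith

lemma muK_Rset_pos {d : ℕ} {κ : Fin d → ℝ} (hκ : ∀ j, 0 ≤ κ j) (x : Fin d → ℝ) {r : ℝ}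
    (hr : 0 < r) : 0 < muK d κ (Rset d x r) := by
  choose p q m M hpq hm0 _ hsub hmlow _ _ using fun j => key1d (hκ j) (x j) hr
  have h3 : ENNReal.ofReal (∏ j, m j) * ∏ j, volume (Set.Ico (p j) (q j))
      ≤ muK d κ (Set.univ.pi fun j => Set.Ico (p j) (q j)) :=
    muK_pi_ge (fun _ => measurableSet_Ico) (fun j => (hm0 j).le) hmlow
  have h4 : muK d κ (Set.univ.pi fun j => Set.Ico (p j) (q j)) ≤ muK d κ (Rset d x r) :=
    measure_mono (Set.pi_mono fun j _ => hsub j)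
  refine lt_of_lt_of_le (lt_of_lt_of_le ?_ h3) h4
  refine ENNReal.mul_pos ?_ ?_
  · exact (ENNReal.ofReal_pos.mpr (Finset.prod_pos fun j _ => hm0 j)).ne'
  · rw [← pos_iff_ne_zero, CanonicallyOrderedAdd.prod_pos]
    intro j _
    rw [Real.volume_Ico]
    exact ENNReal.ofReal_pos.mpr (by linarith [hpq j])

lemma muK_Rset_ne_top {d : ℕ} {κ : Fin d → ℝ} (hκ : ∀ j, 0 ≤ κ j) (x : Fin d → ℝ) {r : ℝ}
    (hr : 0 < r) :
    muK d κ (Rset d x r) ≠ ∞ := by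
  have h : muK d κ (Rset d x r)
      ≤ ENNReal.ofReal (∏ j, (|x j| + r) ^ (2 * κ j)) * ∏ j, volume (Iset (x j) r) := by
    refine muK_pi_le (fun _ => measurableSet_Ico)
      (fun j => Real.rpow_nonneg (by linarith [abs_nonneg (x j)]) _) (fun j t ht => ?_)
    have h0 : 0 ≤ t := nonneg_of_mem_Iset ht
    have ht2 := (abs_le.mp (abs_mem_Iset ht)).2
    rw [abs_of_nonneg h0]
    exact Real.rpow_le_rpow h0 (by linarith) (by linarith [hκ j])
  refine ne_top_of_le_ne_top ?_ h
  refine ENNReal.mul_ne_top ENNReal.ofReal_ne_top ?_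
  refine (ENNReal.prod_lt_top fun j _ => ?_).ne
  rw [volume_Iset]
  exact ENNReal.ofReal_lt_top

lemma muK_Rset_le_nine {d : ℕ} {κ : Fin d → ℝ} (hκ : ∀ j, 0 ≤ κ j) (x : Fin d → ℝ) {r : ℝ}
    (hr : 0 < r) :
    muK d κ (Rset d x (9 * r)) ≤ ENNReal.ofReal (∏ j, A0 (κ j)) * muK d κ (Rset d x r) := by
  choose p q m M hpq hm0 hM0 hsub hmlow hMhigh hnum using fun j => key1d (hκ j) (x j) hr
  have hlen0 : ∀ j, 0 ≤ (|x j| + 9 * r) - max 0 (|x j| - 9 * r) :=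
    fun j => Iset_len_nonneg (by linarith)
  calc muK d κ (Rset d x (9 * r))
      ≤ ENNReal.ofReal (∏ j, M j) * ∏ j, volume (Iset (x j) (9 * r)) :=
        muK_pi_le (fun _ => measurableSet_Ico) hM0 hMhigh
    _ = ENNReal.ofReal (∏ j, (M j * ((|x j| + 9 * r) - max 0 (|x j| - 9 * r)))) := by
        simp_rw [volume_Iset]
        rw [← ENNReal.ofReal_prod_of_nonneg (fun j _ => hlen0 j),
          ← ENNReal.ofReal_mul (Finset.prod_nonneg fun j _ => hM0 j),
          ← Finset.prod_mul_distrib]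
    _ ≤ ENNReal.ofReal (∏ j, (A0 (κ j) * (m j * (q j - p j)))) := by
        refine ENNReal.ofReal_le_ofReal (Finset.prod_le_prod
          (fun j _ => mul_nonneg (hM0 j) (hlen0 j)) (fun j _ => hnum j))
    _ = ENNReal.ofReal (∏ j, A0 (κ j)) *
          (ENNReal.ofReal (∏ j, m j) * ∏ j, volume (Set.Ico (p j) (q j))) := by
        simp_rw [Real.volume_Ico]
        rw [← ENNReal.ofReal_prod_of_nonneg (fun j _ => by linarith [hpq j] : ∀ j ∈ Finset.univ, 0 ≤ q j - p j),
          ← ENNReal.ofReal_mul (Finset.prod_nonneg fun j _ => (hm0 j).le),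
          ← ENNReal.ofReal_mul (Finset.prod_nonneg fun j _ => A0_pos.le),
          ← Finset.prod_mul_distrib, ← Finset.prod_mul_distrib]
    _ ≤ ENNReal.ofReal (∏ j, A0 (κ j)) * muK d κ (Rset d x r) := by
        refine mul_le_mul_right ?_ _
        exact le_trans (muK_pi_ge (fun _ => measurableSet_Ico) (fun j => (hm0 j).le) hmlow)
          (measure_mono (Set.pi_mono fun j _ => hsub j))

end MRWeakAux

/-- Weighted weak type inequality for `M_κ^R`. -/
theorem MR_weighted_weak_type
    (d : ℕ) (hd : 1 ≤ d) (κ : Fin d → ℝ) (hκ : ∀ j, 0 ≤ κ j) :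
    ∃ C : ℝ, 0 < C ∧ ∀ W : (Fin d → ℝ) → ℝ, (∀ x, 0 < W x) →
      LocallyIntegrable W (muK d κ) →
      ∀ f : (Fin d → ℝ) → ℝ, Measurable f → ∀ lam : ℝ, 0 < lam →
      (muK d κ).withDensity (fun x => ENNReal.ofReal (W x))
          {x | ENNReal.ofReal lam < MR d κ f x} ≤
        (ENNReal.ofReal C / ENNReal.ofReal lam) *
          ∫⁻ y, ENNReal.ofReal |f y| * MR d κ W y ∂(muK d κ) := by
  classical
  open MRWeakAux in
  refine ⟨∏ j, A0 (κ j), Finset.prod_pos fun j _ => A0_pos, ?_⟩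
  intro W hW hWloc f hf lam hlam
  have hL0 : ENNReal.ofReal lam ≠ 0 := (ENNReal.ofReal_pos.mpr hlam).ne'
  have hLtop : ENNReal.ofReal lam ≠ ∞ := ENNReal.ofReal_ne_top
  haveI hSFmuK : SFinite (muK d κ) := by unfold muK; infer_instance
  set ν := (muK d κ).withDensity (fun x => ENNReal.ofReal (W x)) with hν
  haveI : SFinite ν := by rw [hν]; infer_instance
  set Itot := ∫⁻ y, ENNReal.ofReal |f y| * MR d κ W y ∂(muK d κ) with hItot
  -- the approximating level sets with bounded radii
  set G : ℕ → Set (Fin d → ℝ) := fun N => {x | ∃ r : ℝ, 0 < r ∧ r ≤ (N : ℝ) + 1 ∧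
    ENNReal.ofReal lam * muK d κ (Rset d x r) <
      ∫⁻ y in Sset d x r, ENNReal.ofReal |f y| ∂(muK d κ)} with hG
  have hGmono : Monotone G := by
    intro N N' hNN' x hx
    obtain ⟨r, h1, h2, h3⟩ := hx
    exact ⟨r, h1, h2.trans (by exact_mod_cast add_le_add_left (Nat.cast_le.mpr hNN') 1), h3⟩
  have hsub : {x | ENNReal.ofReal lam < MR d κ f x} ⊆ ⋃ N, G N := by
    intro x hx
    rw [Set.mem_setOf_eq, MR, lt_iSup_iff] at hx
    obtain ⟨r, hx⟩ := hx
    rw [lt_iSup_iff] at hx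
    obtain ⟨hr, hx⟩ := hx
    have ha0 : muK d κ (Rset d x r) ≠ 0 := (muK_Rset_pos hκ x hr).ne'
    have hatop : muK d κ (Rset d x r) ≠ ∞ := muK_Rset_ne_top hκ x hr
    rw [← ENNReal.div_eq_inv_mul] at hx
    have hx' := (ENNReal.lt_div_iff_mul_lt (Or.inl ha0) (Or.inl hatop)).mp hx
    obtain ⟨N, hN⟩ := exists_nat_ge r
    exact Set.mem_iUnion.mpr ⟨N, r, hr, by linarith, hx'⟩
  refine le_trans (measure_mono hsub) ?_
  rw [hGmono.measure_iUnion]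
  refine iSup_le fun N => ?_
  -- choose radii
  have hex : ∀ x ∈ G N, ∃ r : ℝ, 0 < r ∧ r ≤ (N : ℝ) + 1 ∧
      ENNReal.ofReal lam * muK d κ (Rset d x r) <
        ∫⁻ y in Sset d x r, ENNReal.ofReal |f y| ∂(muK d κ) := fun x hx => hx
  choose! rr hr0 hrN hrlt using hex
  -- Vitali covering lemma
  obtain ⟨u, hu_sub, hu_disj, hu_cov⟩ := Vitali.exists_disjoint_subfamily_covering_enlargement
    (fun x => Sset d x (rr x)) (G N) rr 2 (by norm_num)
    (fun a ha => (hr0 a ha).le) ((N : ℝ) + 1) (fun a ha => hrN a ha)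
    (fun a ha => ⟨a, self_mem_Sset (hr0 a ha)⟩)
  -- positivity of the weighted measure of the symmetrized rectangles
  have hνSpos : ∀ (x : Fin d → ℝ) (s : ℝ), 0 < s → 0 < ν (Sset d x s) := by
    intro x s hs
    rw [hν, withDensity_apply _ measurableSet_Sset]
    by_contra h
    push_neg at h
    rw [le_zero_iff] at h
    have hWm : AEMeasurable (fun y => ENNReal.ofReal (W y))
        ((muK d κ).restrict (Sset d x s)) :=
      ENNReal.measurable_ofReal.comp_aemeasurable
        hWloc.aestronglyMeasurable.aemeasurable.restrict
    have hz := (lintegral_eq_zero_iff' hWm).mp h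
    have hfalse : ∀ᵐ y ∂((muK d κ).restrict (Sset d x s)), False := by
      filter_upwards [hz] with y hy
      exact absurd hy (ENNReal.ofReal_pos.mpr (hW y)).ne'
    have hzero : (muK d κ).restrict (Sset d x s) Set.univ = 0 := by
      simpa using hfalse
    rw [Measure.restrict_apply_univ] at hzero
    exact absurd hzero
      (lt_of_lt_of_le (muK_Rset_pos hκ x hs) (measure_mono Rset_subset_Sset)).ne'
  -- countability of the disjoint family
  have hu_cnt : u.Countable := by
    have h := MeasureTheory.Measure.countable_meas_pos_of_disjoint_iUnion₀ (μ := ν)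
      (As := fun b : u => Sset d (b : Fin d → ℝ) (rr b))
      (fun _ => measurableSet_Sset.nullMeasurableSet)
      (fun b b' hbb' => (hu_disj b.2 b'.2 (Subtype.coe_injective.ne hbb')).aedisjoint)
    have heq : {i : ↥u | 0 < ν (Sset d (i : Fin d → ℝ) (rr i))} = Set.univ :=
      Set.eq_univ_of_forall fun i => hνSpos _ _ (hr0 _ (hu_sub i.2))
    rw [heq] at h
    exact Set.countable_coe_iff.mp (Set.countable_univ_iff.mp h)
  haveI : Countable ↥u := hu_cnt.to_subtype
  -- the enlarged sets cover `G N`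
  have hcov : G N ⊆ ⋃ b ∈ u, Sset d b (5 * rr b) := by
    intro a ha
    obtain ⟨b, hb, hnonempty, hle⟩ := hu_cov a ha
    obtain ⟨z, hza, hzb⟩ := hnonempty
    refine Set.mem_biUnion hb ?_
    have key : ∀ j, abs (|a j| - |b j|) + rr a ≤ 5 * rr b := by
      intro j
      have h1 : abs (|z j| - |a j|) ≤ rr a := abs_mem_Iset (mem_Sset.mp hza j)
      have h2 : abs (|z j| - |b j|) ≤ rr b := abs_mem_Iset (mem_Sset.mp hzb j)
      have h3 : abs (|a j| - |b j|) ≤ abs (|a j| - |z j|) + abs (|z j| - |b j|) :=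
        abs_sub_le _ _ _
      have h4 : abs (|a j| - |z j|) = abs (|z j| - |a j|) := abs_sub_comm _ _
      have hrb : 0 < rr b := hr0 b (hu_sub hb)
      linarith
    exact Sset_sub key (self_mem_Sset (hr0 a ha))
  refine le_trans (measure_mono hcov) ?_
  refine le_trans (measure_biUnion_le ν hu_cnt _) ?_
  -- the per-rectangle estimate
  have hball : ∀ b ∈ u, ν (Sset d b (5 * rr b)) ≤
      (ENNReal.ofReal (∏ j, A0 (κ j)) / ENNReal.ofReal lam) *
        ∫⁻ y in Sset d b (rr b), ENNReal.ofReal |f y| * MR d κ W y ∂(muK d κ) := by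
    intro b hb
    have hbG := hu_sub hb
    have hrb : 0 < rr b := hr0 b hbG
    have ha0 : muK d κ (Rset d b (rr b)) ≠ 0 := (muK_Rset_pos hκ b hrb).ne'
    have hatop : muK d κ (Rset d b (rr b)) ≠ ∞ := muK_Rset_ne_top hκ b hrb
    set a := muK d κ (Rset d b (rr b)) with hadef
    set m5 := ν (Sset d b (5 * rr b)) with hm5
    set CC := ENNReal.ofReal (∏ j, A0 (κ j)) with hCC
    have hCCtop : CC ≠ ∞ := ENNReal.ofReal_ne_top
    -- pointwise lower bound for `MR W`
    have hpt : ∀ y ∈ Sset d b (rr b), m5 ≤ (CC * a) * MR d κ W y := by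
      intro y hy
      have hy' : ∀ j, abs (|y j| - |b j|) ≤ rr b := fun j => abs_mem_Iset (mem_Sset.mp hy j)
      have hS5sub : Sset d b (5 * rr b) ⊆ Sset d y (6 * rr b) := by
        refine Sset_sub fun j => ?_
        have := hy' j
        have h := abs_sub_comm (|y j|) (|b j|)
        linarith
      have hRsub : Rset d y (6 * rr b) ⊆ Rset d b (9 * rr b) := by
        refine Rset_sub fun j => ?_
        have := hy' j
        linarith
      have hWlow : m5 ≤ ∫⁻ z in Sset d y (6 * rr b), ENNReal.ofReal |W z| ∂(muK d κ) := by
        have he : m5 = ∫⁻ z in Sset d b (5 * rr b), ENNReal.ofReal |W z| ∂(muK d κ) := by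
          rw [hm5, hν, withDensity_apply _ measurableSet_Sset]
          exact lintegral_congr fun z => by rw [abs_of_pos (hW z)]
        rw [he]
        exact lintegral_mono_set hS5sub
      have hy6 : 0 < 6 * rr b := by linarith
      have hMRW : (muK d κ (Rset d y (6 * rr b)))⁻¹ *
          ∫⁻ z in Sset d y (6 * rr b), ENNReal.ofReal |W z| ∂(muK d κ) ≤ MR d κ W y := by
        rw [MR]
        exact le_iSup_of_le (6 * rr b) (le_iSup_of_le hy6 le_rfl)
      have hmono : muK d κ (Rset d y (6 * rr b)) ≤ CC * a := by
        refine le_trans (measure_mono hRsub) ?_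
        exact muK_Rset_le_nine hκ b hrb
      have hy0 : muK d κ (Rset d y (6 * rr b)) ≠ 0 := (muK_Rset_pos hκ y hy6).ne'
      have hytop : muK d κ (Rset d y (6 * rr b)) ≠ ∞ := muK_Rset_ne_top hκ y hy6
      calc m5 ≤ ∫⁻ z in Sset d y (6 * rr b), ENNReal.ofReal |W z| ∂(muK d κ) := hWlow
        _ = muK d κ (Rset d y (6 * rr b)) * ((muK d κ (Rset d y (6 * rr b)))⁻¹ *
            ∫⁻ z in Sset d y (6 * rr b), ENNReal.ofReal |W z| ∂(muK d κ)) := by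
            rw [← mul_assoc, ENNReal.mul_inv_cancel hy0 hytop, one_mul]
        _ ≤ muK d κ (Rset d y (6 * rr b)) * MR d κ W y := mul_le_mul_right hMRW _
        _ ≤ (CC * a) * MR d κ W y := mul_le_mul_left hmono _
    -- integrate the pointwise bound
    set Ib := ∫⁻ y in Sset d b (rr b), ENNReal.ofReal |f y| * MR d κ W y ∂(muK d κ) with hIb
    have hmeasf : Measurable fun y => ENNReal.ofReal |f y| :=
      ENNReal.measurable_ofReal.comp hf.abs
    have hchain : (m5 * ENNReal.ofReal lam) * a ≤ (CC * Ib) * a := by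
      calc (m5 * ENNReal.ofReal lam) * a = m5 * (ENNReal.ofReal lam * a) := by ring
        _ ≤ m5 * ∫⁻ y in Sset d b (rr b), ENNReal.ofReal |f y| ∂(muK d κ) :=
            mul_le_mul_right (hrlt b hbG).le _
        _ = ∫⁻ y in Sset d b (rr b), m5 * ENNReal.ofReal |f y| ∂(muK d κ) :=
            (lintegral_const_mul m5 hmeasf).symm
        _ ≤ ∫⁻ y in Sset d b (rr b),
              (CC * a) * (ENNReal.ofReal |f y| * MR d κ W y) ∂(muK d κ) := by
            refine setLIntegral_mono' measurableSet_Sset fun y hy => ?_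
            calc m5 * ENNReal.ofReal |f y|
                ≤ ((CC * a) * MR d κ W y) * ENNReal.ofReal |f y| :=
                  mul_le_mul_left (hpt y hy) _
              _ = (CC * a) * (ENNReal.ofReal |f y| * MR d κ W y) := by ring
        _ = (CC * a) * Ib :=
            lintegral_const_mul' _ _ (ENNReal.mul_ne_top hCCtop hatop)
        _ = (CC * Ib) * a := by ring
    have hcancel : m5 * ENNReal.ofReal lam ≤ CC * Ib :=
      (ENNReal.mul_le_mul_iff_left ha0 hatop).mp hchain
    have hdiv : m5 ≤ (CC * Ib) / ENNReal.ofReal lam :=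
      (ENNReal.le_div_iff_mul_le (Or.inl hL0) (Or.inl hLtop)).mpr hcancel
    calc m5 ≤ (CC * Ib) / ENNReal.ofReal lam := hdiv
      _ = (CC / ENNReal.ofReal lam) * Ib := by
          rw [div_eq_mul_inv, div_eq_mul_inv]; ring
  -- sum up
  calc ∑' (b : ↥u), ν (Sset d (b : Fin d → ℝ) (5 * rr b))
      ≤ ∑' (b : ↥u), (ENNReal.ofReal (∏ j, A0 (κ j)) / ENNReal.ofReal lam) *
          ∫⁻ y in Sset d (b : Fin d → ℝ) (rr b),
            ENNReal.ofReal |f y| * MR d κ W y ∂(muK d κ) :=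
        ENNReal.tsum_le_tsum fun b => hball b b.2
    _ = (ENNReal.ofReal (∏ j, A0 (κ j)) / ENNReal.ofReal lam) *
          ∑' (b : ↥u), ∫⁻ y in Sset d (b : Fin d → ℝ) (rr b),
            ENNReal.ofReal |f y| * MR d κ W y ∂(muK d κ) := ENNReal.tsum_mul_left
    _ = (ENNReal.ofReal (∏ j, A0 (κ j)) / ENNReal.ofReal lam) *
          ∫⁻ y in ⋃ (b : ↥u), Sset d (b : Fin d → ℝ) (rr b),
            ENNReal.ofReal |f y| * MR d κ W y ∂(muK d κ) := by
        rw [lintegral_iUnion (fun (b : ↥u) => measurableSet_Sset)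
          (fun (b b' : ↥u) hbb' => hu_disj b.2 b'.2 (Subtype.coe_injective.ne hbb'))]
    _ ≤ (ENNReal.ofReal (∏ j, A0 (κ j)) / ENNReal.ofReal lam) * Itot := by
        refine mul_le_mul_right (setLIntegral_le_lintegral _ _) _
end
end
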